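/- Let E₀ be the elliptic curve defined by the Weierstrass equation y² = x³ + 75x + 125, and let p > 5 be a prime. Then the group E₀(F_p) of F_p-points of the reduction of E₀ modulo p contains a point of order 2 or a point of order 3; equivalently, the order of the finite group E₀(F_p) is divisible by 2 or by 3 for every prime p > 5. -/

import Mathlib

open Polynomial

private lemma aux_ne_zero {p : ℕ} [Fact p.Prime] (hp5 : 5 < p) (a b c : ℕ) :
    ((2 ^ a * 3 ^ b * 5 ^ c : ℕ) : ZMod p) ≠ 0 := by
  have pp : p.Prime := Fact.out
  intro h
  rw [ZMod.natCast_eq_zero_iff] at h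
  rcases (Nat.Prime.dvd_mul pp).mp h with h | h
  · rcases (Nat.Prime.dvd_mul pp).mp h with h | h
    · have := Nat.le_of_dvd (by norm_num) (pp.dvd_of_dvd_pow h)
      omega
    · have := Nat.le_of_dvd (by norm_num) (pp.dvd_of_dvd_pow h)
      omega
  · have := Nat.le_of_dvd (by norm_num) (pp.dvd_of_dvd_pow h)
    omega

private lemma frob_fixed {p : ℕ} [Fact p.Prime] {F : Type} [Field F] [Fintype F]
    [Algebra (ZMod p) F] {z : F} (hz : z ^ p = z) :
    ∃ a : ZMod p, algebraMap (ZMod p) F a = z := by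
  classical
  by_contra hc
  push_neg at hc
  have hp1 : 1 < p := (Fact.out : p.Prime).one_lt
  set g : F[X] := X ^ p - X with hg
  have hdeg : g.natDegree = p := by
    rw [hg, natDegree_sub_eq_left_of_natDegree_lt, natDegree_X_pow]
    rw [natDegree_X, natDegree_X_pow]
    omega
  have hg0 : g ≠ 0 := fun h => by rw [h, natDegree_zero] at hdeg; omega
  have hroot : ∀ w : F, w ^ p = w → w ∈ g.roots := by
    intro w hw
    rw [mem_roots hg0]
    simp [hg, IsRoot, sub_eq_zero, hw]
  set S : Finset F := Finset.univ.image (algebraMap (ZMod p) F) with hS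
  have hSsub : ∀ w ∈ insert z S, w ∈ g.roots.toFinset := by
    intro w hw
    rw [Multiset.mem_toFinset]
    rcases Finset.mem_insert.mp hw with rfl | hw
    · exact hroot _ hz
    · obtain ⟨a, _, rfl⟩ := Finset.mem_image.mp hw
      exact hroot _ (by rw [← map_pow, ZMod.pow_card])
  have hzS : z ∉ S := by
    intro hzS
    obtain ⟨a, _, ha⟩ := Finset.mem_image.mp hzS
    exact hc a ha
  have hcard : p + 1 ≤ g.roots.toFinset.card := by
    calc p + 1 = (insert z S).card := by
          rw [Finset.card_insert_of_notMem hzS,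
            Finset.card_image_of_injective _ (algebraMap (ZMod p) F).injective,
            Finset.card_univ, ZMod.card]
      _ ≤ _ := Finset.card_le_card (fun w hw => hSsub w hw)
  have h1 := (Multiset.toFinset_card_le g.roots).trans ((Polynomial.card_roots' g).trans_eq hdeg)
  omega

/-- If `-15` is not a square mod `p`, then the cubic `x³ + 75x + 125` has a root mod `p`. -/
private lemma exists_root {p : ℕ} [Fact p.Prime] (hp5 : 5 < p)
    (hns : ¬ IsSquare (-15 : ZMod p)) :
    ∃ r : ZMod p, r ^ 3 + 75 * r + 125 = 0 := by
  by_contra hroot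
  push_neg at hroot
  set K := ZMod p
  set f : K[X] := X ^ 3 + C 75 * X + C 125 with hf
  have hdeg : f.natDegree = 3 := by rw [hf]; compute_degree!
  have hmon : f.Monic := by
    rw [hf, add_assoc]
    apply monic_X_pow_add
    have hb : (C (75 : K) * X + C 125).degree ≤ 1 := by compute_degree
    exact lt_of_le_of_lt hb (by norm_num)
  have hirr : Irreducible f := by
    refine (hmon.irreducible_iff_roots_eq_zero_of_degree_le_three (by omega) (by omega)).mpr ?_
    refine Multiset.eq_zero_iff_forall_notMem.mpr fun r hr => ?_
    rw [mem_roots hmon.ne_zero] at hr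
    have := hr
    simp only [hf, IsRoot, eval_add, eval_mul, eval_pow, eval_X, eval_C] at this
    exact hroot r this
  haveI := Fact.mk hirr
  set F := AdjoinRoot f
  set α := AdjoinRoot.root f with hαdef
  have hα : α ^ 3 + 75 * α + 125 = 0 := by
    have h := AdjoinRoot.eval₂_root f
    rw [hf] at h
    simpa [eval₂_add, eval₂_mul, eval₂_pow, eval₂_X, eval₂_C,
      map_ofNat (AdjoinRoot.of (X ^ 3 + C (75 : K) * X + C 125)) 75,
      map_ofNat (AdjoinRoot.of (X ^ 3 + C (75 : K) * X + C 125)) 125] using h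
  haveI : Module.Finite K F := (AdjoinRoot.powerBasis hmon.ne_zero).finite
  haveI : Finite F := Module.finite_of_finite K
  haveI : Fintype F := Fintype.ofFinite F
  have hfinrank : Module.finrank K F = 3 := by
    rw [(AdjoinRoot.powerBasis hmon.ne_zero).finrank]
    exact hdeg
  have hcard : Fintype.card F = p ^ 3 := by
    have h := Module.card_eq_pow_finrank (K := K) (V := F)
    rwa [ZMod.card, hfinrank] at h
  haveI : CharP F p := charP_of_injective_algebraMap (algebraMap K F).injective p
  have h75 : (75 : F) ^ p = 75 := by
    rw [show (75 : F) = algebraMap K F 75 from (map_ofNat _ 75).symm, ← map_pow, ZMod.pow_card]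
  have h125 : (125 : F) ^ p = 125 := by
    rw [show (125 : F) = algebraMap K F 125 from (map_ofNat _ 125).symm, ← map_pow, ZMod.pow_card]
  have hfrob : ∀ z : F, z ^ 3 + 75 * z + 125 = 0 →
      (z ^ p) ^ 3 + 75 * (z ^ p) + 125 = 0 := by
    intro z hz
    calc (z ^ p) ^ 3 + 75 * (z ^ p) + 125
        = (z ^ 3 + 75 * z + 125) ^ p := by
          rw [add_pow_char, add_pow_char, mul_pow, h75, h125, pow_right_comm]
      _ = 0 := by rw [hz, zero_pow (Fact.out : p.Prime).ne_zero]
  have hnofix : ∀ z : F, z ^ 3 + 75 * z + 125 = 0 → z ^ p ≠ z := by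
    intro z hz hfix
    obtain ⟨a, ha⟩ := frob_fixed hfix
    apply hroot a
    apply (algebraMap K F).injective
    rw [map_add, map_add, map_mul, map_pow, ha, map_zero]
    simpa [map_ofNat (algebraMap K F) 75, map_ofNat (algebraMap K F) 125] using hz
  obtain ⟨β, hβdef⟩ : ∃ b : F, b = α ^ p := ⟨_, rfl⟩
  obtain ⟨γ, hγdef⟩ : ∃ c : F, c = β ^ p := ⟨_, rfl⟩
  have hβ : β ^ 3 + 75 * β + 125 = 0 := by rw [hβdef]; exact hfrob α hα
  have hγ : γ ^ 3 + 75 * γ + 125 = 0 := by rw [hγdef]; exact hfrob β hβ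
  have hγp : γ ^ p = α := by
    rw [hγdef, hβdef, ← pow_mul, ← pow_mul, show p * (p * p) = p ^ 3 by ring, ← hcard]
    exact FiniteField.pow_card α
  have hab : α ≠ β := by
    intro h
    exact hnofix α hα (by rw [← hβdef, ← h])
  have hbc : β ≠ γ := by
    intro h
    exact hnofix β hβ (by rw [← hγdef, ← h])
  have hac : α ≠ γ := by
    intro h
    apply hnofix α hα
    calc α ^ p = γ ^ p := by rw [← h]
      _ = α := hγp
  have h1 : α ^ 2 + α * β + β ^ 2 + 75 = 0 := by
    have e : (α - β) * (α ^ 2 + α * β + β ^ 2 + 75) = 0 := by linear_combination hα - hβ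
    rcases mul_eq_zero.mp e with e | e
    · exact absurd e (sub_ne_zero.mpr hab)
    · exact e
  have h3 : α ^ 2 + α * γ + γ ^ 2 + 75 = 0 := by
    have e : (α - γ) * (α ^ 2 + α * γ + γ ^ 2 + 75) = 0 := by linear_combination hα - hγ
    rcases mul_eq_zero.mp e with e | e
    · exact absurd e (sub_ne_zero.mpr hac)
    · exact e
  have hs : α + β + γ = 0 := by
    have e : (β - γ) * (α + β + γ) = 0 := by linear_combination h1 - h3
    rcases mul_eq_zero.mp e with e | e
    · exact absurd e (sub_ne_zero.mpr hbc)
    · exact e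
  have hγeq : γ = -α - β := by linear_combination hs
  have hq : α * β = (α + β) ^ 2 + 75 := by linear_combination -h1
  have h2F : (2 : F) ≠ 0 := by
    intro h
    have h2 : ((2 : ℕ) : F) = 0 := by exact_mod_cast h
    have hdvd := (CharP.cast_eq_zero_iff F p 2).mp h2
    have := Nat.le_of_dvd (by norm_num) hdvd
    omega
  have hs3 : (α + β) ^ 3 = -75 * (α + β) + 125 := by
    have h2 : (2 : F) * ((α + β) ^ 3 - (-75 * (α + β) + 125)) = 0 := by
      linear_combination -hα - hβ - (3 : F) * (α + β) * hq
    rcases mul_eq_zero.mp h2 with h2 | h2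
    · exact absurd h2 h2F
    · linear_combination h2
  obtain ⟨δ, hδdef⟩ : ∃ d : F, d = (α - β) * (α - γ) * (β - γ) := ⟨_, rfl⟩
  have hδ2 : δ ^ 2 = -2109375 := by
    rw [hδdef, hγeq]
    linear_combination
      (-4 * ((α * β) ^ 2 + (α * β) * ((α + β) ^ 2 + 75) + ((α + β) ^ 2 + 75) ^ 2) -
        15 * (α + β) ^ 2 * (α * β + (α + β) ^ 2 + 75) - 12 * (α + β) ^ 4) * hq +
      (-27 * ((α + β) ^ 3 + 75 * (α + β) + 125)) * hs3
  have hδfix : δ ^ p = δ := by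
    rw [hδdef, mul_pow, mul_pow, sub_pow_char, sub_pow_char, sub_pow_char, hγp,
      ← hβdef, ← hγdef]
    ring
  obtain ⟨d, hd⟩ := frob_fixed hδfix
  have hd2 : d ^ 2 = -2109375 := by
    apply (algebraMap K F).injective
    rw [map_pow, hd, hδ2, map_neg, map_ofNat]
  apply hns
  have h375 : (375 : K) ≠ 0 := by
    have := aux_ne_zero (p := p) hp5 0 1 3
    norm_num at this
    exact_mod_cast this
  refine ⟨d * 375⁻¹, ?_⟩
  field_simp
  linear_combination -hd2

private lemma point_some_eq {F : Type} [Field F] {W : WeierstrassCurve.Affine F}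
    {x₁ y₁ x₂ y₂ : F} (h₁ : W.Nonsingular x₁ y₁) (h₂ : W.Nonsingular x₂ y₂)
    (hx : x₁ = x₂) (hy : y₁ = y₂) :
    WeierstrassCurve.Affine.Point.some _ _ h₁ = WeierstrassCurve.Affine.Point.some _ _ h₂ := by
  subst hx; subst hy; rfl

/-- For every prime `p > 5`, the group of `F_p`-points of the reduction of the
elliptic curve `E₀ : y² = x³ + 75x + 125` contains a point of order `2` or a point of
order `3`; in particular `#E₀(F_p)` is divisible by `2` or by `3`. -/
theorem stmt18 (p : ℕ) [Fact p.Prime] (hp5 : 5 < p)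
    (W : WeierstrassCurve.Affine (ZMod p))
    (hW : W = { a₁ := 0, a₂ := 0, a₃ := 0, a₄ := 75, a₆ := 125 }) :
    ∃ P : W.Point, addOrderOf P = 2 ∨ addOrderOf P = 3 := by
  by_cases hsq : IsSquare (-15 : ZMod p)
  · -- 3-torsion point (-5, 5t) with t² = -15
    obtain ⟨t, ht⟩ := hsq
    have h15 : (15 : ZMod p) ≠ 0 := by
      have := aux_ne_zero (p := p) hp5 0 1 1
      norm_num at this
      exact_mod_cast this
    have htne : t ≠ 0 := by
      intro h
      apply h15
      linear_combination -ht - t * h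
    have h10 : (10 : ZMod p) ≠ 0 := by
      have := aux_ne_zero (p := p) hp5 1 0 1
      norm_num at this
      exact_mod_cast this
    have h10t : (10 : ZMod p) * t ≠ 0 := mul_ne_zero h10 htne
    have hP : W.Nonsingular (-5) (5 * t) := by
      rw [W.nonsingular_iff, W.equation_iff, hW]
      constructor
      · simp only
        linear_combination -25 * ht
      · right
        simp only
        intro h
        apply h10t
        linear_combination h
    have hy : (5 * t : ZMod p) ≠ W.negY (-5) (5 * t) := by
      rw [hW]
      simp only [WeierstrassCurve.Affine.negY]
      intro h
      apply h10t
      linear_combination h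
    have hL : W.slope (-5) (-5) (5 * t) (5 * t) = -t := by
      rw [WeierstrassCurve.Affine.slope_of_Y_ne rfl hy, hW]
      simp only [WeierstrassCurve.Affine.negY]
      rw [div_eq_iff (by intro h; apply h10t; linear_combination h)]
      linear_combination -10 * ht
    refine ⟨.some _ _ hP, Or.inr ?_⟩
    haveI : Fact (Nat.Prime 3) := ⟨by norm_num⟩
    have key : WeierstrassCurve.Affine.Point.some _ _ hP + .some _ _ hP = -.some _ _ hP := by
      rw [WeierstrassCurve.Affine.Point.add_self_of_Y_ne hy,
        WeierstrassCurve.Affine.Point.neg_some]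
      refine point_some_eq _ _ ?_ ?_
      · rw [hL, hW]
        simp only [WeierstrassCurve.Affine.addX]
        linear_combination -ht
      · rw [hL, hW]
        simp only [WeierstrassCurve.Affine.addY, WeierstrassCurve.Affine.negAddY,
          WeierstrassCurve.Affine.addX, WeierstrassCurve.Affine.negY]
        linear_combination (-t) * ht
    apply addOrderOf_eq_prime
    · calc (3 : ℕ) • WeierstrassCurve.Affine.Point.some _ _ hP
          = (2 + 1 : ℕ) • WeierstrassCurve.Affine.Point.some _ _ hP := by norm_num
        _ = 2 • WeierstrassCurve.Affine.Point.some _ _ hP +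
            WeierstrassCurve.Affine.Point.some _ _ hP := succ_nsmul _ 2
        _ = (WeierstrassCurve.Affine.Point.some _ _ hP + WeierstrassCurve.Affine.Point.some _ _ hP) +
            WeierstrassCurve.Affine.Point.some _ _ hP := by rw [two_nsmul]
        _ = -WeierstrassCurve.Affine.Point.some _ _ hP +
            WeierstrassCurve.Affine.Point.some _ _ hP := by rw [key]
        _ = 0 := neg_add_cancel _
    · exact WeierstrassCurve.Affine.Point.some_ne_zero hP
  · -- 2-torsion point (r, 0) with r³ + 75r + 125 = 0
    obtain ⟨r, hr⟩ := exists_root hp5 hsq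
    have hP : W.Nonsingular r 0 := by
      rw [W.nonsingular_iff, W.equation_iff, hW]
      constructor
      · simp only
        linear_combination -hr
      · left
        simp only
        intro h
        have h18750 : (18750 : ZMod p) = 0 := by
          linear_combination (-(4 * r ^ 2 - 10 * r + 200)) * h - 3 * (4 * r - 10) * hr
        have := aux_ne_zero (p := p) hp5 1 1 5
        norm_num at this
        exact this (by exact_mod_cast h18750)
    refine ⟨.some _ _ hP, Or.inl ?_⟩
    haveI : Fact (Nat.Prime 2) := ⟨by norm_num⟩
    have hy : (0 : ZMod p) = W.negY r 0 := by
      rw [hW]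
      simp [WeierstrassCurve.Affine.negY]
    apply addOrderOf_eq_prime
    · show 2 • _ = 0
      rw [two_nsmul]
      exact WeierstrassCurve.Affine.Point.add_self_of_Y_eq hy
    · exact WeierstrassCurve.Affine.Point.some_ne_zero hP
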